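/- Let C > 30 and 0 < ε₁ ≤ 1/(10C), let t > 0, and define ρ(x) = 0 for x < t/5 and ρ(x) = ε₁/(log(15x/t))² for x ≥ t/5, and γ(x) = C·∫_x^∞ ρ(u)/u du. Then γ(t/5) = C·ε₁/log 3 < 1, and for every C' > 1 and x ≥ t/2 one has γ(x) − γ(C'x) ≥ (C·log C'/C')·ρ(x). -/

import Mathlib

open MeasureTheory Real

lemma key_integral (ε₁ t a : ℝ) (hε₁ : 0 < ε₁) (ht : 0 < t) (ha : t / 5 ≤ a) :
    ∫ u in Set.Ioi a, (if u < t / 5 then 0 else ε₁ / (Real.log (15 * u / t)) ^ 2) / u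
      = ε₁ / Real.log (15 * a / t) := by
  have ha0 : 0 < a := lt_of_lt_of_le (by positivity) ha
  have h3 : ∀ u, a ≤ u → 3 ≤ 15 * u / t := by
    intro u hu
    rw [le_div_iff₀ ht]
    nlinarith [le_trans ha hu]
  have hlogpos : ∀ u, a ≤ u → 0 < Real.log (15 * u / t) := by
    intro u hu
    have := h3 u hu
    have : (1:ℝ) < 15 * u / t := by linarith
    exact Real.log_pos this
  set g : ℝ → ℝ := fun u => -(ε₁ / Real.log (15 * u / t)) with hg
  have hderiv : ∀ u ∈ Set.Ici a, HasDerivAt g (ε₁ / (Real.log (15 * u / t)) ^ 2 / u) u := by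
    intro u hu
    have hu' : a ≤ u := hu
    have hu0 : 0 < u := lt_of_lt_of_le ha0 hu'
    have hL : 0 < Real.log (15 * u / t) := hlogpos u hu'
    have h1 : HasDerivAt (fun u : ℝ => 15 * u / t) (15 / t) u := by
      simpa using ((hasDerivAt_id u).const_mul (15:ℝ)).div_const t
    have harg : (0:ℝ) < 15 * u / t := by positivity
    have h2 : HasDerivAt (fun u : ℝ => Real.log (15 * u / t)) ((15 * u / t)⁻¹ * (15 / t)) u :=
      HasDerivAt.comp (h₂ := Real.log) u (Real.hasDerivAt_log harg.ne') h1
    have h2' : HasDerivAt (fun u : ℝ => Real.log (15 * u / t)) (1 / u) u := by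
      convert h2 using 1
      field_simp
    have h3' : HasDerivAt (fun u : ℝ => (Real.log (15 * u / t))⁻¹)
        (-(1 / u) / (Real.log (15 * u / t)) ^ 2) u := h2'.inv (ne_of_gt hL)
    have h4 := (h3'.const_mul ε₁).neg
    convert h4 using 1
    · rfl
    · rfl
    · rfl
    rw [mul_div_assoc, neg_div, mul_neg, neg_neg]
    ring
  have htend : Filter.Tendsto g Filter.atTop (nhds 0) := by
    have h1 : Filter.Tendsto (fun u : ℝ => 15 * u / t) Filter.atTop Filter.atTop := by
      apply Filter.Tendsto.atTop_div_const ht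
      exact Filter.tendsto_id.const_mul_atTop (by norm_num)
    have h2 : Filter.Tendsto (fun u : ℝ => Real.log (15 * u / t)) Filter.atTop Filter.atTop :=
      Real.tendsto_log_atTop.comp h1
    have h3' : Filter.Tendsto (fun u : ℝ => (Real.log (15 * u / t))⁻¹) Filter.atTop (nhds 0) :=
      h2.inv_tendsto_atTop
    have := ((h3'.const_mul ε₁).neg)
    simpa [hg, div_eq_mul_inv] using this
  have hnonneg : ∀ u ∈ Set.Ioi a, 0 ≤ ε₁ / (Real.log (15 * u / t)) ^ 2 / u := by
    intro u hu
    have hu0 : 0 < u := lt_of_lt_of_le ha0 (le_of_lt hu)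
    positivity
  have hint := integral_Ioi_of_hasDerivAt_of_nonneg' hderiv hnonneg htend
  have hcongr : ∫ u in Set.Ioi a, (if u < t / 5 then 0 else ε₁ / (Real.log (15 * u / t)) ^ 2) / u
      = ∫ u in Set.Ioi a, ε₁ / (Real.log (15 * u / t)) ^ 2 / u := by
    apply setIntegral_congr_fun measurableSet_Ioi
    intro u hu
    have : ¬ (u < t / 5) := not_lt.mpr (le_trans ha (le_of_lt hu))
    simp [this]
  rw [hcongr, hint, hg]
  ring

/-- With `ρ(x) = 0` for `x < t/5` and `ρ(x) = ε₁/(log(15x/t))²` otherwise, and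
`γ(x) = C·∫ₓ^∞ ρ(u)/u du`: one has `γ(t/5) = C·ε₁/log 3 < 1`, and for every
`C' > 1` and `x ≥ t/2`, `γ(x) − γ(C'x) ≥ (C·log C'/C')·ρ(x)`. -/
theorem gamma_properties (C ε₁ t : ℝ) (hC : 30 < C) (hε₁ : 0 < ε₁)
    (hε₁C : ε₁ ≤ 1 / (10 * C)) (ht : 0 < t) :
    let ρ : ℝ → ℝ := fun x => if x < t / 5 then 0 else ε₁ / (Real.log (15 * x / t)) ^ 2
    let γ : ℝ → ℝ := fun x => C * ∫ u in Set.Ioi x, ρ u / u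
    γ (t / 5) = C * ε₁ / Real.log 3 ∧ γ (t / 5) < 1 ∧
      ∀ C' > (1 : ℝ), ∀ x ≥ t / 2,
        γ x - γ (C' * x) ≥ (C * Real.log C' / C') * ρ x := by
  intro ρ γ
  have hC0 : (0:ℝ) < C := by linarith
  have hγ : ∀ a, t / 5 ≤ a → γ a = C * (ε₁ / Real.log (15 * a / t)) := by
    intro a ha
    simp only [γ, ρ]
    rw [key_integral ε₁ t a hε₁ ht ha]
  have h15 : 15 * (t / 5) / t = 3 := by field_simp; ring
  have hlog3 : 1 < Real.log 3 := by
    rw [Real.lt_log_iff_exp_lt (by norm_num)]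
    calc Real.exp 1 < 2.7182818286 := Real.exp_one_lt_d9
    _ < 3 := by norm_num
  have h1 : γ (t / 5) = C * ε₁ / Real.log 3 := by
    rw [hγ (t/5) le_rfl, h15, mul_div_assoc]
  have hCε : C * ε₁ ≤ 1 / 10 := by
    have h10 : (0:ℝ) < 10 * C := by linarith
    calc C * ε₁ ≤ C * (1 / (10 * C)) := by nlinarith
    _ = 1 / 10 := by field_simp
  refine ⟨h1, ?_, ?_⟩
  · rw [h1, div_lt_one (by linarith)]
    linarith
  · intro C' hC' x hx
    have hx5 : t / 5 ≤ x := by linarith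
    have hx0 : 0 < x := by linarith [div_pos ht (by norm_num : (0:ℝ) < 2)]
    have hC'x5 : t / 5 ≤ C' * x := by nlinarith
    have hargpos : (0:ℝ) < 15 * x / t := by positivity
    have hL1 : 1 < Real.log (15 * x / t) := by
      rw [Real.lt_log_iff_exp_lt hargpos]
      calc Real.exp 1 < 2.7182818286 := Real.exp_one_lt_d9
      _ ≤ 15 * x / t := by
        rw [le_div_iff₀ ht]; nlinarith
    set L := Real.log (15 * x / t) with hLdef
    set D := Real.log C' with hDdef
    have hD0 : 0 < D := Real.log_pos hC'
    have hD_le : D ≤ C' - 1 := by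
      have := Real.log_le_sub_one_of_pos (by linarith : (0:ℝ) < C')
      linarith [this]
    have hlogsplit : Real.log (15 * (C' * x) / t) = D + L := by
      have : 15 * (C' * x) / t = C' * (15 * x / t) := by ring
      rw [this, Real.log_mul (by linarith) (ne_of_gt hargpos)]
    have hρx : ρ x = ε₁ / L ^ 2 := by
      simp only [ρ]
      rw [if_neg (not_lt.mpr hx5)]
    rw [hγ x hx5, hγ (C' * x) hC'x5, hlogsplit, hρx]
    have hL0 : 0 < L := by linarith
    have hDL : 0 < D + L := by linarith
    have e1 : C * (ε₁ / L) - C * (ε₁ / (D + L)) = C * ε₁ * D / (L * (D + L)) := by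
      field_simp; ring
    have e2 : C * D / C' * (ε₁ / L ^ 2) = C * ε₁ * D / (C' * L ^ 2) := by
      field_simp
    rw [ge_iff_le, e1, e2]
    apply div_le_div_of_nonneg_left (by positivity) (by positivity)
    have hD' : D ≤ (C' - 1) * L := le_trans hD_le (by nlinarith)
    nlinarith [mul_nonneg hL0.le (sub_nonneg.mpr hD')]
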